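/- Let f = Σ_α a_α X^α be a multivariate real polynomial in n variables with total degree d > 0, and let c_d > 0 be such that f_d(x) ≥ c_d for all x ∈ ℝ^n with Σ_{i=1}^n x_i^2 = 1. For j = 1, …, d−1 set c_j := −Σ_{|α| = j} |a_α| (the negated 1-norm of the degree-j homogeneous component). Let q(λ) = c_d λ^d + Σ_{j=1}^{d-1} c_j λ^j, let R ≥ 0 be the largest nonnegative real root of q (q(R) = 0 and every t ≥ 0 with q(t) = 0 satisfies t ≤ R), and let R_lit := max(1, (1/c_d) · Σ_{0 < |α| < d} |a_α|). Then R ≤ R_lit. If moreover d > 2, there is a coefficient a_α ≠ 0 with 0 < |α| < d−1, and R ≠ 1, then R < R_lit. -/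
import Mathlib


open MvPolynomial Finset

theorem new_bound_le_literature_bound
    {n : ℕ} (f : MvPolynomial (Fin n) ℝ) (d : ℕ)
    (hd : d = f.totalDegree) (hd0 : 0 < d)
    (cd : ℝ) (hcd : 0 < cd)
    (hcdbound : ∀ x : Fin n → ℝ, (∑ i, (x i) ^ 2) = 1 →
      cd ≤ eval x (homogeneousComponent d f))
    (c : ℕ → ℝ)
    (hc : ∀ j, c j =
      -(∑ α ∈ f.support.filter (fun α => (α.sum fun _ e => e) = j), |f.coeff α|))
    (R : ℝ) (hR0 : 0 ≤ R)
    (hq : cd * R ^ d + ∑ j ∈ Finset.Icc 1 (d - 1), c j * R ^ j = 0)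
    (hqmax : ∀ t : ℝ, 0 ≤ t →
      (cd * t ^ d + ∑ j ∈ Finset.Icc 1 (d - 1), c j * t ^ j = 0) → t ≤ R)
    (Rlit : ℝ)
    (hRlit : Rlit = max 1 ((1 / cd) *
      ∑ α ∈ f.support.filter
        (fun α => 0 < (α.sum fun _ e => e) ∧ (α.sum fun _ e => e) < d),
        |f.coeff α|)) :
    R ≤ Rlit ∧
    ((2 < d ∧ (∃ α ∈ f.support, 0 < (α.sum fun _ e => e) ∧
        (α.sum fun _ e => e) < d - 1) ∧ R ≠ 1) → R < Rlit) := by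
  set S : ℝ := ∑ α ∈ f.support.filter
      (fun α => 0 < (α.sum fun _ e => e) ∧ (α.sum fun _ e => e) < d),
      |f.coeff α| with hSdef
  have hSj_nonneg : ∀ j, 0 ≤ -(c j) := by
    intro j
    rw [hc, neg_neg]
    exact Finset.sum_nonneg fun _ _ => abs_nonneg _
  have hS : S = ∑ j ∈ Finset.Icc 1 (d - 1), -(c j) := by
    simp only [hc, neg_neg, hSdef]
    rw [← Finset.sum_fiberwise_of_maps_to (g := fun α => α.sum fun _ e => e)
      (t := Finset.Icc 1 (d - 1)) ?_ (fun α => |f.coeff α|)]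
    · apply Finset.sum_congr rfl
      intro j hj
      congr 1
      rw [Finset.filter_filter]
      apply Finset.filter_congr
      intro α hα
      simp only [Finset.mem_Icc] at hj
      constructor
      · rintro ⟨_, h3⟩; exact h3
      · intro h3; refine ⟨⟨?_, ?_⟩, h3⟩ <;> omega
    · intro α hα
      simp only [Finset.mem_filter] at hα
      obtain ⟨-, h1, h2⟩ := hα
      simp only [Finset.mem_Icc]
      omega
  have hkey : cd * R ^ d = ∑ j ∈ Finset.Icc 1 (d - 1), -(c j) * R ^ j := by
    have : ∑ j ∈ Finset.Icc 1 (d - 1), -(c j) * R ^ j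
        = -∑ j ∈ Finset.Icc 1 (d - 1), c j * R ^ j := by
      rw [← Finset.sum_neg_distrib]
      apply Finset.sum_congr rfl
      intro j _; ring
    linarith [hq, this]
  have hRlit1 : (1 : ℝ) ≤ Rlit := by rw [hRlit]; exact le_max_left _ _
  have hRlitS : (1 / cd) * S ≤ Rlit := by rw [hRlit]; exact le_max_right _ _
  have hRd : R ^ d = R ^ (d - 1) * R := by
    conv_lhs => rw [show d = (d - 1) + 1 by omega]
    rw [pow_succ]
  have hmain : R ≤ Rlit := by
    by_contra h
    push_neg at h
    have h1 : 1 < R := lt_of_le_of_lt hRlit1 h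
    have hScd : S < cd * R := by
      have h2 : (1 / cd) * S < R := lt_of_le_of_lt hRlitS h
      have := mul_lt_mul_of_pos_left h2 hcd
      rw [← mul_assoc, mul_one_div, div_self (ne_of_gt hcd), one_mul] at this
      exact this
    have hle : ∑ j ∈ Finset.Icc 1 (d - 1), -(c j) * R ^ j
        ≤ S * R ^ (d - 1) := by
      rw [hS, Finset.sum_mul]
      apply Finset.sum_le_sum
      intro j hj
      apply mul_le_mul_of_nonneg_left _ (hSj_nonneg j)
      exact pow_le_pow_right₀ (le_of_lt h1) (Finset.mem_Icc.mp hj).2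
    have hpow : (0 : ℝ) < R ^ (d - 1) := pow_pos (lt_trans one_pos h1) _
    nlinarith [hkey, hle, hScd, hpow, hRd]
  refine ⟨hmain, ?_⟩
  rintro ⟨hd2, ⟨α, hα, hα1, hα2⟩, hR1⟩
  rcases lt_trichotomy R 1 with h1 | h1 | h1
  · exact lt_of_lt_of_le h1 hRlit1
  · exact absurd h1 hR1
  · -- strict case
    set j0 := α.sum fun _ e => e with hj0
    have hj0mem : j0 ∈ Finset.Icc 1 (d - 1) := by
      rw [Finset.mem_Icc]; omega
    have hSj0pos : 0 < -(c j0) := by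
      rw [hc, neg_neg]
      have hαmem : α ∈ f.support.filter (fun β => (β.sum fun _ e => e) = j0) :=
        Finset.mem_filter.mpr ⟨hα, rfl⟩
      have h0 : 0 < |f.coeff α| := abs_pos.mpr (MvPolynomial.mem_support_iff.mp hα)
      calc (0:ℝ) < |f.coeff α| := h0
        _ ≤ _ := Finset.single_le_sum (fun i _ => abs_nonneg (f.coeff i)) hαmem
    have hlt : ∑ j ∈ Finset.Icc 1 (d - 1), -(c j) * R ^ j
        < S * R ^ (d - 1) := by
      rw [hS, Finset.sum_mul]
      apply Finset.sum_lt_sum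
      · intro j hj
        apply mul_le_mul_of_nonneg_left _ (hSj_nonneg j)
        exact pow_le_pow_right₀ (le_of_lt h1) (Finset.mem_Icc.mp hj).2
      · refine ⟨j0, hj0mem, ?_⟩
        apply mul_lt_mul_of_pos_left _ hSj0pos
        exact pow_lt_pow_right₀ h1 (by omega)
    have hpow : (0 : ℝ) < R ^ (d - 1) := pow_pos (lt_trans one_pos h1) _
    have hcdR : cd * R < S := by
      have : cd * R * R ^ (d - 1) < S * R ^ (d - 1) := by
        nlinarith [hkey, hlt, hRd]
      exact lt_of_mul_lt_mul_right this (le_of_lt hpow)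
    have : R < (1 / cd) * S := by
      rw [one_div, ← div_eq_inv_mul, lt_div_iff₀ hcd]
      linarith [hcdR]
    exact lt_of_lt_of_le this hRlitS
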